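/- For every k ≥ 1 and sufficiently large n, the k-star graph S_{k,n} satisfies μ(S_{k,n}) ≥ 2^k. In particular, there exist graphs with coloring number k+1 whose hat guessing number is at least 2^k. -/

import Mathlib

/-- The hat guessing number of a graph. -/
noncomputable def hatGuessingNumber {V : Type*} [Fintype V] (G : SimpleGraph V) : ℕ :=
  sSup {k : ℕ | ∃ F : V → (V → Fin k) → Fin k,
    (∀ v : V, ∀ x y : V → Fin k, (∀ u : V, G.Adj v u → x u = y u) → F v x = F v y) ∧
    (∀ x : V → Fin k, ∃ v : V, F v x = x v)}

/-- The coloring number `col(G)`: the least `c` such that there is a linear order of the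
vertices in which every vertex has at most `c−1` earlier neighbors. -/
noncomputable def coloringNumber {V : Type*} [Fintype V] (G : SimpleGraph V) : ℕ :=
  sInf {c : ℕ | ∃ π : Fin (Fintype.card V) ≃ V,
    ∀ t : Fin (Fintype.card V),
      Set.ncard {u : V | G.Adj (π t) u ∧ π.symm u < t} ≤ c - 1}

/-- The `k`-star `S_{k,n}`: the join of a clique on `k` vertices with an independent set
of `n` vertices (each clique vertex adjacent to all `n` leaves). -/
def kStar (k n : ℕ) : SimpleGraph (Fin k ⊕ Fin n) :=
  SimpleGraph.fromRel (fun x y =>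
    match x, y with
    | Sum.inl _, Sum.inr _ => True
    | Sum.inl _, Sum.inl _ => True
    | _, _ => False)


open Finset

lemma clique_lemma (q : ℕ) (hq : 0 < q) : ∀ (k : ℕ) (A : Finset (Fin k → Fin q)),
    A.card ≤ 2 ^ k - 1 →
    ∃ f : Fin k → (Fin k → Fin q) → Fin q,
      (∀ i x y, (∀ j, j ≠ i → x j = y j) → f i x = f i y) ∧
      (∀ c ∈ A, ∃ i, f i c = c i) := by
  intro k
  induction k with
  | zero =>
    intro A hA
    refine ⟨fun i => i.elim0, fun i => i.elim0, fun c hc => ?_⟩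
    simp at hA
    simp [hA] at hc
  | succ k ih =>
    intro A hA
    classical
    -- fibers
    set At : Fin q → Finset (Fin k → Fin q) :=
      fun t => (A.filter (fun c => c (Fin.last k) = t)).image Fin.init with hAt
    have hcard_le : ∀ t, (At t).card ≤ (A.filter (fun c => c (Fin.last k) = t)).card :=
      fun t => Finset.card_image_le
    have hbad_unique : ∀ t₁ t₂, 2 ^ k ≤ (At t₁).card → 2 ^ k ≤ (At t₂).card → t₁ = t₂ := by
      intro t₁ t₂ h₁ h₂
      by_contra hne
      have hdisj : Disjoint (A.filter (fun c => c (Fin.last k) = t₁))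
          (A.filter (fun c => c (Fin.last k) = t₂)) := by
        rw [Finset.disjoint_left]
        intro c hc1 hc2
        rw [Finset.mem_filter] at hc1 hc2
        exact hne (hc1.2 ▸ hc2.2 ▸ rfl)
      have hsub : (A.filter (fun c => c (Fin.last k) = t₁)) ∪
          (A.filter (fun c => c (Fin.last k) = t₂)) ⊆ A :=
        Finset.union_subset (Finset.filter_subset _ _) (Finset.filter_subset _ _)
      have := Finset.card_le_card hsub
      rw [Finset.card_union_of_disjoint hdisj] at this
      have h1 := hcard_le t₁
      have h2 := hcard_le t₂
      have hx : 2 ^ k + 2 ^ k ≤ A.card := le_trans (Nat.add_le_add (le_trans h₁ h1) (le_trans h₂ h2)) this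
      have h2k : 2 ^ (k+1) = 2 ^ k + 2 ^ k := by ring
      rw [h2k] at hA
      have hp : 0 < 2 ^ k := Nat.pow_pos (by norm_num)
      set a := 2 ^ k
      set b := A.card
      clear_value a b
      clear * - hx hA hp
      omega
    set tstar : Fin q := if h : ∃ t, 2 ^ k ≤ (At t).card then h.choose else ⟨0, hq⟩ with htstar
    -- strategies for fibers
    have hFt : ∀ t : Fin q, ∃ Ft : Fin k → (Fin k → Fin q) → Fin q,
        (∀ i x y, (∀ j, j ≠ i → x j = y j) → Ft i x = Ft i y) ∧
        (t ≠ tstar → ∀ c ∈ At t, ∃ i, Ft i c = c i) := by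
      intro t
      by_cases h : (At t).card ≤ 2 ^ k - 1
      · obtain ⟨Ft, h1, h2⟩ := ih (At t) h
        exact ⟨Ft, h1, fun _ => h2⟩
      · refine ⟨fun _ _ => ⟨0, hq⟩, fun _ _ _ _ => rfl, fun hne => absurd ?_ hne⟩
        have hbad : 2 ^ k ≤ (At t).card := by omega
        have hex : ∃ t, 2 ^ k ≤ (At t).card := ⟨t, hbad⟩
        rw [htstar, dif_pos hex]
        exact hbad_unique t hex.choose hbad hex.choose_spec
    choose Ft hFt1 hFt2 using hFt
    refine ⟨fun i => if h : i = Fin.last k then (fun _ => tstar)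
        else (fun x => Ft (x (Fin.last k)) (i.castPred h) (Fin.init x)), ?_, ?_⟩
    · intro i x y hxy
      by_cases h : i = Fin.last k
      · simp [h]
      · simp only [dif_neg h]
        have hlast : x (Fin.last k) = y (Fin.last k) := hxy _ (Ne.symm h)
        rw [hlast]
        apply hFt1
        intro j hj
        have hne : (j.castSucc) ≠ i := by
          intro hc
          apply hj
          apply Fin.castSucc_injective
          rw [hc, Fin.castSucc_castPred]
        simp only [Fin.init]
        exact hxy _ hne
    · intro c hc
      by_cases h : c (Fin.last k) = tstar
      · exact ⟨Fin.last k, by simp [h]⟩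
      · have hmem : Fin.init c ∈ At (c (Fin.last k)) := by
          apply Finset.mem_image_of_mem
          exact Finset.mem_filter.2 ⟨hc, rfl⟩
        obtain ⟨i, hi⟩ := hFt2 (c (Fin.last k)) h (Fin.init c) hmem
        refine ⟨i.castSucc, ?_⟩
        have hne : (i.castSucc : Fin (k+1)) ≠ Fin.last k := (Fin.castSucc_lt_last i).ne
        simp only [dif_neg hne, Fin.castPred_castSucc]
        exact hi

lemma hat_bound {V : Type*} [Fintype V] [DecidableEq V] [Nonempty V] (G : SimpleGraph V)
    (m : ℕ)
    (h : ∃ F : V → (V → Fin m) → Fin m,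
      (∀ v : V, ∀ x y : V → Fin m, (∀ u : V, G.Adj v u → x u = y u) → F v x = F v y) ∧
      (∀ x : V → Fin m, ∃ v : V, F v x = x v)) :
    m ≤ Fintype.card V := by
  classical
  by_contra hm
  push_neg at hm
  obtain ⟨F, hloc, hwin⟩ := h
  set v := Fintype.card V with hv
  have hv1 : 1 ≤ v := Fintype.card_pos
  have hm1 : 1 ≤ m := by omega
  have hcover : (Finset.univ : Finset (V → Fin m)) =
      Finset.univ.biUnion (fun u => Finset.univ.filter (fun x => F u x = x u)) := by
    ext x
    simp only [Finset.mem_univ, Finset.mem_biUnion, Finset.mem_filter, true_and, true_iff]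
    obtain ⟨u, hu⟩ := hwin x
    exact ⟨u, hu⟩
  have hfilter : ∀ u : V, (Finset.univ.filter (fun x : V → Fin m => F u x = x u)).card
      ≤ m ^ (v - 1) := by
    intro u
    have : m ^ (v-1) = Fintype.card ({w : V // w ≠ u} → Fin m) := by
      rw [Fintype.card_fun, Fintype.card_fin]
      congr 1
      rw [Fintype.card_subtype_compl, Fintype.card_subtype_eq]
    rw [this, ← Finset.card_univ]
    apply Finset.card_le_card_of_injOn (fun x (w : {w : V // w ≠ u}) => x w.1)
      (fun _ _ => Finset.mem_univ _)
    intro x hx y hy hxy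
    rw [Finset.mem_coe, Finset.mem_filter] at hx hy
    have hagree : ∀ w : V, w ≠ u → x w = y w := by
      intro w hw
      exact congrFun hxy ⟨w, hw⟩
    funext w
    by_cases hw : w = u
    · subst hw
      have hF : F w x = F w y := hloc w x y (fun z hz => hagree z (G.ne_of_adj hz).symm)
      rw [← hx.2, ← hy.2, hF]
    · exact hagree w hw
  have hcard : m ^ v ≤ v * m ^ (v - 1) := by
    calc m ^ v = (Finset.univ : Finset (V → Fin m)).card := by
          rw [Finset.card_univ, Fintype.card_fun, Fintype.card_fin]
      _ = (Finset.univ.biUnion (fun u => Finset.univ.filter (fun x => F u x = x u))).card := by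
          rw [← hcover]
      _ ≤ ∑ u : V, (Finset.univ.filter (fun x : V → Fin m => F u x = x u)).card :=
          Finset.card_biUnion_le
      _ ≤ ∑ _u : V, m ^ (v - 1) := Finset.sum_le_sum (fun u _ => hfilter u)
      _ = v * m ^ (v - 1) := by rw [Finset.sum_const, Finset.card_univ, smul_eq_mul]
  have hlt : v * m ^ (v - 1) < m ^ v := by
    have hpos : 0 < m ^ (v - 1) := Nat.pow_pos hm1
    calc v * m ^ (v - 1) < m * m ^ (v - 1) := by
          exact (Nat.mul_lt_mul_right hpos).2 hm
      _ = m ^ v := by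
          rw [← pow_succ']
          congr 1
          omega
  omega

lemma kStar_adj_inl_inl {k n : ℕ} (i j : Fin k) :
    (kStar k n).Adj (Sum.inl i) (Sum.inl j) ↔ i ≠ j := by
  simp [kStar, SimpleGraph.fromRel_adj]

lemma kStar_adj_inl_inr {k n : ℕ} (i : Fin k) (j : Fin n) :
    (kStar k n).Adj (Sum.inl i) (Sum.inr j) := by
  simp [kStar, SimpleGraph.fromRel_adj]

lemma kStar_adj_inr_inl {k n : ℕ} (j : Fin n) (i : Fin k) :
    (kStar k n).Adj (Sum.inr j) (Sum.inl i) := by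
  simp [kStar, SimpleGraph.fromRel_adj]

lemma kStar_adj_inr_inr {k n : ℕ} (i j : Fin n) :
    ¬ (kStar k n).Adj (Sum.inr i) (Sum.inr j) := by
  simp [kStar, SimpleGraph.fromRel_adj]

lemma kStar_strategy (k n : ℕ) (hk : 1 ≤ k)
    (hn : Fintype.card {S : Finset (Fin k → Fin (2^k)) // S.card = 2^k} ≤ n) :
    ∃ F : (Fin k ⊕ Fin n) → ((Fin k ⊕ Fin n) → Fin (2^k)) → Fin (2^k),
      (∀ v, ∀ x y, (∀ u, (kStar k n).Adj v u → x u = y u) → F v x = F v y) ∧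
      (∀ x, ∃ v, F v x = x v) := by
  classical
  set q := 2 ^ k with hqdef
  have hq : 0 < q := Nat.pow_pos (by norm_num)
  -- leaf assignments
  obtain ⟨ι⟩ : Nonempty ({S : Finset (Fin k → Fin q) // S.card = q} ↪ Fin n) := by
    apply Function.Embedding.nonempty_of_card_le
    rwa [Fintype.card_fin]
  have hg : ∀ S : {S : Finset (Fin k → Fin q) // S.card = q},
      ∃ g : (Fin k → Fin q) → Fin q, ∀ v : Fin q, ∃ c ∈ S.1, g c = v := by
    intro S
    have hcard : Fintype.card {x // x ∈ S.1} = q := by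
      rw [Fintype.card_coe]; exact S.2
    set e := Fintype.equivFinOfCardEq hcard with he
    refine ⟨fun c => if h : c ∈ S.1 then e ⟨c, h⟩ else ⟨0, hq⟩, fun v => ?_⟩
    refine ⟨(e.symm v).1, (e.symm v).2, ?_⟩
    simp only [dif_pos (e.symm v).2, Subtype.coe_eta, Equiv.apply_symm_apply]
  choose g hgspec using hg
  set G : Fin n → (Fin k → Fin q) → Fin q :=
    fun j => if h : ∃ S, ι S = j then g h.choose else fun _ => ⟨0, hq⟩ with hG
  set Alive : (Fin n → Fin q) → Finset (Fin k → Fin q) :=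
    fun y => Finset.univ.filter (fun c => ∀ j : Fin n, G j c ≠ y j) with hAlive
  have alive_card : ∀ y, (Alive y).card ≤ q - 1 := by
    intro y
    by_contra hcon
    push_neg at hcon
    have hle : q ≤ (Alive y).card := by omega
    obtain ⟨S, hS, hScard⟩ := Finset.exists_subset_card_eq hle
    set S' : {S : Finset (Fin k → Fin q) // S.card = q} := ⟨S, hScard⟩ with hS'
    have hex : ∃ T, ι T = ι S' := ⟨S', rfl⟩
    have hchoose : hex.choose = S' := ι.injective hex.choose_spec
    have hGj : G (ι S') = g S' := by
      rw [hG]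
      simp only [dif_pos hex, hchoose]
    obtain ⟨c, hcS, hgc⟩ := hgspec S' (y (ι S'))
    have hcAlive : c ∈ Alive y := hS hcS
    rw [hAlive, Finset.mem_filter] at hcAlive
    exact hcAlive.2 (ι S') (by rw [hGj]; exact hgc)
  -- clique strategies
  set cs : Finset (Fin k → Fin q) → Fin k → (Fin k → Fin q) → Fin q :=
    fun A => if h : A.card ≤ q - 1 then (clique_lemma q hq k A (by rwa [← hqdef])).choose
      else fun _ _ => ⟨0, hq⟩ with hcs
  have cs_loc : ∀ A i x y, (∀ j, j ≠ i → x j = y j) → cs A i x = cs A i y := by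
    intro A i x y hxy
    rw [hcs]
    by_cases h : A.card ≤ q - 1
    · simp only [dif_pos h]
      exact (clique_lemma q hq k A (by rwa [← hqdef])).choose_spec.1 i x y hxy
    · simp [dif_neg h]
  have cs_win : ∀ A, A.card ≤ q - 1 → ∀ c ∈ A, ∃ i, cs A i c = c i := by
    intro A hA c hc
    rw [hcs]
    simp only [dif_pos hA]
    exact (clique_lemma q hq k A (by rwa [← hqdef])).choose_spec.2 c hc
  refine ⟨fun v => match v with
    | Sum.inl i => fun x => cs (Alive (fun j => x (Sum.inr j))) i (fun i' => x (Sum.inl i'))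
    | Sum.inr j => fun x => G j (fun i => x (Sum.inl i)), ?_, ?_⟩
  · intro v x y hxy
    match v with
    | Sum.inl i =>
      have h1 : (fun j => x (Sum.inr j)) = fun j => y (Sum.inr j) :=
        funext fun j => hxy _ (kStar_adj_inl_inr i j)
      simp only [h1]
      apply cs_loc
      intro i' hne
      exact hxy _ ((kStar_adj_inl_inl i i').2 (Ne.symm hne))
    | Sum.inr j =>
      have h1 : (fun i => x (Sum.inl i)) = fun i => y (Sum.inl i) :=
        funext fun i => hxy _ (kStar_adj_inr_inl j i)
      simp only [h1]
  · intro x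
    by_cases h : ∃ j, G j (fun i => x (Sum.inl i)) = x (Sum.inr j)
    · obtain ⟨j, hj⟩ := h
      exact ⟨Sum.inr j, hj⟩
    · push_neg at h
      have hmem : (fun i => x (Sum.inl i)) ∈ Alive (fun j => x (Sum.inr j)) := by
        rw [hAlive, Finset.mem_filter]
        exact ⟨Finset.mem_univ _, fun j => h j⟩
      obtain ⟨i, hi⟩ := cs_win _ (alive_card _) _ hmem
      exact ⟨Sum.inl i, hi⟩

lemma kStar_col (k n : ℕ) (hk : 1 ≤ k) (hn : 1 ≤ n) :
    coloringNumber (kStar k n) = k + 1 := by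
  classical
  have hcV : Fintype.card (Fin k ⊕ Fin n) = k + n := by simp
  set π : Fin (Fintype.card (Fin k ⊕ Fin n)) ≃ (Fin k ⊕ Fin n) :=
    (finCongr hcV).trans finSumFinEquiv.symm with hπdef
  have hmem : (k + 1) ∈ {c : ℕ | ∃ π : Fin (Fintype.card (Fin k ⊕ Fin n)) ≃ (Fin k ⊕ Fin n),
      ∀ t, Set.ncard {u | (kStar k n).Adj (π t) u ∧ π.symm u < t} ≤ c - 1} := by
    refine ⟨π, fun t => ?_⟩
    have hsimp : (k + 1) - 1 = k := by omega
    rw [hsimp]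
    match h : π t with
    | Sum.inr j =>
      have hsub : {u | (kStar k n).Adj (Sum.inr j) u ∧ π.symm u < t} ⊆ Set.range Sum.inl := by
        intro u hu
        obtain ⟨hadj, _⟩ := hu
        match u with
        | Sum.inl i => exact ⟨i, rfl⟩
        | Sum.inr j' => exact absurd hadj (kStar_adj_inr_inr j j')
      calc Set.ncard {u | (kStar k n).Adj (Sum.inr j) u ∧ π.symm u < t}
          ≤ Set.ncard (Set.range (Sum.inl : Fin k → Fin k ⊕ Fin n)) :=
            Set.ncard_le_ncard hsub (Set.toFinite _)
        _ = Set.ncard (Sum.inl '' (Set.univ : Set (Fin k))) := by rw [Set.image_univ]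
        _ = Set.ncard (Set.univ : Set (Fin k)) :=
            Set.ncard_image_of_injective _ Sum.inl_injective
        _ = k := by rw [Set.ncard_univ, Nat.card_eq_fintype_card, Fintype.card_fin]
    | Sum.inl i =>
      have htval : (t : ℕ) = (i : ℕ) := by
        have : t = π.symm (Sum.inl i) := by rw [← h, Equiv.symm_apply_apply]
        rw [this]
        simp [hπdef]
      have hsub : {u | (kStar k n).Adj (Sum.inl i) u ∧ π.symm u < t} ⊆ π '' (Set.Iio t) := by
        intro u hu
        exact ⟨π.symm u, hu.2, Equiv.apply_symm_apply _ _⟩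
      calc Set.ncard {u | (kStar k n).Adj (Sum.inl i) u ∧ π.symm u < t}
          ≤ Set.ncard (π '' (Set.Iio t)) := Set.ncard_le_ncard hsub (Set.toFinite _)
        _ = Set.ncard (Set.Iio t) := Set.ncard_image_of_injective _ π.injective
        _ = (t : ℕ) := by rw [← Finset.coe_Iio, Set.ncard_coe_finset, Fin.card_Iio]
        _ ≤ k := by rw [htval]; omega
  have hlow : ∀ c ∈ {c : ℕ | ∃ π : Fin (Fintype.card (Fin k ⊕ Fin n)) ≃ (Fin k ⊕ Fin n),
      ∀ t, Set.ncard {u | (kStar k n).Adj (π t) u ∧ π.symm u < t} ≤ c - 1}, k + 1 ≤ c := by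
    rintro c ⟨ρ, hρ⟩
    by_contra hcon
    push_neg at hcon
    have hck : c ≤ k := by omega
    set j0 : Fin n := ⟨0, hn⟩ with hj0
    set W : Finset (Fin k ⊕ Fin n) := insert (Sum.inr j0) (Finset.univ.image Sum.inl) with hW
    have hWmem : ∀ w ∈ W, w = Sum.inr j0 ∨ ∃ i : Fin k, w = Sum.inl i := by
      intro w hw
      rw [hW, Finset.mem_insert] at hw
      rcases hw with h | h
      · exact Or.inl h
      · obtain ⟨i, _, hi⟩ := Finset.mem_image.1 h
        exact Or.inr ⟨i, hi.symm⟩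
    have hWcard : W.card = k + 1 := by
      rw [hW, Finset.card_insert_of_notMem (by simp),
        Finset.card_image_of_injective _ Sum.inl_injective, Finset.card_univ, Fintype.card_fin]
    have hWclique : ∀ w ∈ W, ∀ w' ∈ W, w ≠ w' → (kStar k n).Adj w w' := by
      intro w hw w' hw' hne
      rcases hWmem w hw with h1 | ⟨i, h1⟩ <;> rcases hWmem w' hw' with h2 | ⟨i', h2⟩
      · exact absurd (h1.trans h2.symm) hne
      · rw [h1, h2]; exact kStar_adj_inr_inl j0 i'
      · rw [h1, h2]; exact kStar_adj_inl_inr i j0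
      · rw [h1, h2]; rw [h1, h2] at hne
        exact (kStar_adj_inl_inl i i').2 (fun hii => hne (by rw [hii]))
    set T : Finset (Fin (Fintype.card (Fin k ⊕ Fin n))) := W.image (fun w => ρ.symm w) with hT
    have hTne : T.Nonempty := by
      rw [hT]
      exact (Finset.insert_nonempty _ _).image _
    set tm := T.max' hTne with htm
    obtain ⟨v, hvW, hveq⟩ := Finset.mem_image.1 (T.max'_mem hTne)
    have hv : ρ tm = v := by rw [htm, ← hveq, Equiv.apply_symm_apply]
    have hsub : ↑(W.erase v) ⊆ {u | (kStar k n).Adj (ρ tm) u ∧ ρ.symm u < tm} := by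
      intro u hu
      rw [Finset.mem_coe, Finset.mem_erase] at hu
      obtain ⟨hune, huW⟩ := hu
      refine ⟨by rw [hv]; exact hWclique v hvW u huW (Ne.symm hune), ?_⟩
      have hle : ρ.symm u ≤ tm := Finset.le_max' T _ (Finset.mem_image_of_mem _ huW)
      refine lt_of_le_of_ne hle (fun heq => hune ?_)
      rw [← hv, ← heq, Equiv.apply_symm_apply]
    have hk2 : k ≤ Set.ncard {u | (kStar k n).Adj (ρ tm) u ∧ ρ.symm u < tm} := by
      calc k = (W.erase v).card := by rw [Finset.card_erase_of_mem hvW, hWcard]; omega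
        _ = Set.ncard ↑(W.erase v) := (Set.ncard_coe_finset _).symm
        _ ≤ _ := Set.ncard_le_ncard hsub (Set.toFinite _)
    have := hρ tm
    omega
  exact le_antisymm (Nat.sInf_le hmem) (le_csInf ⟨k + 1, hmem⟩ hlow)

/-- For every `k ≥ 1` and sufficiently large `n`, the `k`-star graph
`S_{k,n}` satisfies `μ(S_{k,n}) ≥ 2^k`; moreover its coloring number is `k+1`, so there
exist graphs with coloring number `k+1` whose hat guessing number is at least `2^k`. -/
theorem kStar_hat_guessing_ge (k : ℕ) (hk : 1 ≤ k) :
    ∃ N : ℕ, ∀ n : ℕ, N ≤ n →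
      2 ^ k ≤ hatGuessingNumber (kStar k n) ∧ coloringNumber (kStar k n) = k + 1 := by
  classical
  refine ⟨Fintype.card {S : Finset (Fin k → Fin (2^k)) // S.card = 2^k} + 1, fun n hn => ?_⟩
  have hn1 : 1 ≤ n := by omega
  have hncard : Fintype.card {S : Finset (Fin k → Fin (2^k)) // S.card = 2^k} ≤ n := by omega
  constructor
  · haveI : Nonempty (Fin k ⊕ Fin n) := ⟨Sum.inl ⟨0, hk⟩⟩
    have hmem : (2^k) ∈ {m : ℕ | ∃ F : (Fin k ⊕ Fin n) → ((Fin k ⊕ Fin n) → Fin m) → Fin m,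
        (∀ v, ∀ x y, (∀ u, (kStar k n).Adj v u → x u = y u) → F v x = F v y) ∧
        (∀ x, ∃ v, F v x = x v)} := kStar_strategy k n hk hncard
    have hbdd : BddAbove {m : ℕ | ∃ F : (Fin k ⊕ Fin n) → ((Fin k ⊕ Fin n) → Fin m) → Fin m,
        (∀ v, ∀ x y, (∀ u, (kStar k n).Adj v u → x u = y u) → F v x = F v y) ∧
        (∀ x, ∃ v, F v x = x v)} :=
      ⟨Fintype.card (Fin k ⊕ Fin n), fun m hm => hat_bound (kStar k n) m hm⟩
    exact le_csSup hbdd hmem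
  · exact kStar_col k n hk hn1
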